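/- Let I be an ideal strictly containing Fin and (xₙ) ∈ ℓ₁ with all xₙ ≠ 0. Then A_{Fin}(xₙ) is countable while A_I(xₙ) is uncountable; in particular A_{Fin}(xₙ) ⊊ A_I(xₙ). -/

import Mathlib

open Filter

private lemma exists_seq_aux (x : ℕ → ℝ) (habs : Summable fun n => |x n|)
    (hne : ∀ n, x n ≠ 0) {A : Set ℕ} (hA : A.Infinite) :
    ∃ m : ℕ → ℕ, (∀ n, m n ∈ A) ∧ ∀ n, |x (m (n + 1))| < |x (m n)| / 2 := by
  have key : ∀ a : ℕ, ∃ b, b ∈ A ∧ |x b| < |x a| / 2 := by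
    intro a
    have hpos : (0 : ℝ) < |x a| / 2 := by
      have := abs_pos.2 (hne a); linarith
    have h0 : Tendsto (fun n => |x n|) cofinite (nhds 0) := habs.tendsto_cofinite_zero
    have hev : ∀ᶠ n in cofinite, |x n| < |x a| / 2 := h0.eventually_lt_const hpos
    have hfin : {n | ¬ |x n| < |x a| / 2}.Finite := eventually_cofinite.1 hev
    obtain ⟨b, hb⟩ := (hA.diff hfin).nonempty
    exact ⟨b, hb.1, by simpa using hb.2⟩
  choose f hf1 hf2 using key
  obtain ⟨a0, ha0⟩ := hA.nonempty
  refine ⟨fun n => f^[n] a0, ?_, ?_⟩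
  · intro n
    induction n with
    | zero => simpa using ha0
    | succ k ih =>
        show f^[k + 1] a0 ∈ A
        rw [Function.iterate_succ_apply']
        exact hf1 _
  · intro n
    show |x (f^[n + 1] a0)| < |x (f^[n] a0)| / 2
    rw [Function.iterate_succ_apply']
    exact hf2 _

set_option maxHeartbeats 1000000 in
private lemma inj_subsums (y : ℕ → ℝ) (hsum : Summable fun n => |y n|)
    (hdec : ∀ n, |y (n + 1)| < |y n| / 2) (hpos : ∀ n, 0 < |y n|)
    {S T : Set ℕ} (h : (∑' n, S.indicator y n) = ∑' n, T.indicator y n) : S = T := by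
  classical
  by_contra hST
  have hP : ∃ n, ¬ (n ∈ S ↔ n ∈ T) := by
    by_contra hc
    push_neg at hc
    exact hST (Set.ext fun n => hc n)
  set n0 := Nat.find hP with hn0def
  have hn0 : ¬ (n0 ∈ S ↔ n0 ∈ T) := Nat.find_spec hP
  have hmin : ∀ k < n0, (k ∈ S ↔ k ∈ T) := by
    intro k hk
    by_contra hc
    exact absurd hk (not_lt.2 (Nat.find_le hc))
  set d : ℕ → ℝ := fun n => S.indicator y n - T.indicator y n with hd
  have hy : Summable y := hsum.of_abs
  have hS : Summable (S.indicator y) := hy.indicator S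
  have hT : Summable (T.indicator y) := hy.indicator T
  have hdsum : Summable d := hS.sub hT
  have htsum : (∑' n, d n) = 0 := by
    rw [hd, Summable.tsum_sub hS hT, h, sub_self]
  -- d k = 0 for k < n0
  have hd0 : ∀ k < n0, d k = 0 := by
    intro k hk
    have := hmin k hk
    by_cases hkS : k ∈ S
    · simp [hd, Set.indicator_of_mem hkS, Set.indicator_of_mem (this.1 hkS)]
    · simp [hd, Set.indicator_of_notMem hkS,
        Set.indicator_of_notMem (fun hkT => hkS (this.2 hkT))]
  have hdn0 : |d n0| = |y n0| := by
    by_cases hS0 : n0 ∈ S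
    · have hT0 : n0 ∉ T := fun hT0 => hn0 ⟨fun _ => hT0, fun _ => hS0⟩
      simp [hd, Set.indicator_of_mem hS0, Set.indicator_of_notMem hT0]
    · have hT0 : n0 ∈ T := by
        by_contra hT0
        exact hn0 ⟨fun h' => absurd h' hS0, fun h' => absurd h' hT0⟩
      simp [hd, Set.indicator_of_notMem hS0, Set.indicator_of_mem hT0]
  have hdle : ∀ k, |d k| ≤ |y k| := by
    intro k
    by_cases hkS : k ∈ S <;> by_cases hkT : k ∈ T <;>
      simp [hd, Set.indicator_of_mem, Set.indicator_of_notMem, hkS, hkT, abs_nonneg]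
  -- split the sum
  have hsplit : (∑ i ∈ Finset.range (n0 + 1), d i) + ∑' i, d (i + (n0 + 1)) = ∑' i, d i :=
    Summable.sum_add_tsum_nat_add (n0 + 1) hdsum
  have hsum0 : (∑ i ∈ Finset.range (n0 + 1), d i) = d n0 := by
    refine Finset.sum_eq_single_of_mem n0 (Finset.self_mem_range_succ n0) ?_
    intro k hk hkne
    exact hd0 k (lt_of_le_of_ne (Nat.lt_succ_iff.1 (Finset.mem_range.1 hk)) hkne)
  have htail : d n0 = -∑' i, d (i + (n0 + 1)) := by
    have := hsplit
    rw [hsum0, htsum] at this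
    linarith
  -- bound the tail
  have hdshift : Summable fun i => d (i + (n0 + 1)) := (summable_nat_add_iff (n0 + 1)).2 hdsum
  have hdabs : Summable fun i => |d (i + (n0 + 1))| := hdshift.abs
  have hyabs : Summable fun i => |y (i + (n0 + 1))| := (summable_nat_add_iff (n0 + 1)).2 hsum
  have hgeo : Summable fun i : ℕ => |y (n0 + 1)| * (1 / 2 : ℝ) ^ i :=
    summable_geometric_two.mul_left _
  have hptw : ∀ i : ℕ, |y (i + (n0 + 1))| ≤ |y (n0 + 1)| * (1 / 2 : ℝ) ^ i := by
    intro i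
    induction i with
    | zero => simp
    | succ k ih =>
        have h1 := hdec (k + (n0 + 1))
        have : (k + 1) + (n0 + 1) = (k + (n0 + 1)) + 1 := by ring
        rw [this]
        calc |y ((k + (n0 + 1)) + 1)| ≤ |y (k + (n0 + 1))| / 2 := le_of_lt h1
          _ ≤ (|y (n0 + 1)| * (1 / 2 : ℝ) ^ k) / 2 := by linarith
          _ = |y (n0 + 1)| * (1 / 2 : ℝ) ^ (k + 1) := by ring
  have hb1 : |∑' i, d (i + (n0 + 1))| ≤ ∑' i, |d (i + (n0 + 1))| := by
    have hn : Summable fun i => ‖d (i + (n0 + 1))‖ := by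
      simpa only [Real.norm_eq_abs] using hdabs
    have := norm_tsum_le_tsum_norm hn
    simpa only [Real.norm_eq_abs] using this
  have hb2 : (∑' i, |d (i + (n0 + 1))|) ≤ ∑' i, |y (i + (n0 + 1))| :=
    Summable.tsum_le_tsum (fun i => hdle _) hdabs hyabs
  have hb3 : (∑' i, |y (i + (n0 + 1))|) ≤ ∑' i : ℕ, |y (n0 + 1)| * (1 / 2 : ℝ) ^ i :=
    Summable.tsum_le_tsum hptw hyabs hgeo
  have hb4 : (∑' i : ℕ, |y (n0 + 1)| * (1 / 2 : ℝ) ^ i) = |y (n0 + 1)| * 2 := by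
    rw [tsum_mul_left, tsum_geometric_two]
  have hfinal : |y n0| ≤ |y (n0 + 1)| * 2 := by
    calc |y n0| = |d n0| := hdn0.symm
      _ = |∑' i, d (i + (n0 + 1))| := by rw [htail, abs_neg]
      _ ≤ |y (n0 + 1)| * 2 := by
          refine le_trans hb1 (le_trans hb2 (le_trans hb3 (le_of_eq hb4)))
  have := hdec n0
  linarith

/-- Let `I` be an ideal strictly containing `Fin` and `(xₙ) ∈ ℓ₁` with all `xₙ ≠ 0`.
Then `A_Fin(xₙ)` is countable while `A_I(xₙ)` is uncountable; in particular
`A_Fin(xₙ) ⊊ A_I(xₙ)`. -/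
theorem fin_achievement_strict_subset (x : ℕ → ℝ)
    (habs : Summable fun n => |x n|) (hne : ∀ n, x n ≠ 0)
    (I : Set (Set ℕ))
    (hdown : ∀ A ∈ I, ∀ B ⊆ A, B ∈ I)
    (hunion : ∀ A ∈ I, ∀ B ∈ I, A ∪ B ∈ I)
    (hproper : (Set.univ : Set ℕ) ∉ I)
    (hfin : ∀ A : Set ℕ, A.Finite → A ∈ I)
    (hstrict : ∃ A ∈ I, A.Infinite) :
    {r : ℝ | ∃ A : Set ℕ, A.Finite ∧ HasSum (Set.indicator A x) r}.Countable ∧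
      ¬ {r : ℝ | ∃ A ∈ I, HasSum (Set.indicator A x) r}.Countable ∧
      {r : ℝ | ∃ A : Set ℕ, A.Finite ∧ HasSum (Set.indicator A x) r} ⊂
        {r : ℝ | ∃ A ∈ I, HasSum (Set.indicator A x) r} := by
  classical
  have hx : Summable x := habs.of_abs
  -- countability of the finite-set sums
  have hcount : {r : ℝ | ∃ A : Set ℕ, A.Finite ∧ HasSum (Set.indicator A x) r}.Countable := by
    have hsub : {r : ℝ | ∃ A : Set ℕ, A.Finite ∧ HasSum (Set.indicator A x) r} ⊆
        Set.range (fun s : Finset ℕ => ∑ n ∈ s, x n) := by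
      rintro r ⟨A, hAfin, hAsum⟩
      refine ⟨hAfin.toFinset, ?_⟩
      have h1 : HasSum (Set.indicator A x) (∑ n ∈ hAfin.toFinset, Set.indicator A x n) := by
        apply hasSum_sum_of_ne_finset_zero
        intro b hb
        exact Set.indicator_of_notMem (by simpa using hb) x
      have h2 : (∑ n ∈ hAfin.toFinset, Set.indicator A x n) = ∑ n ∈ hAfin.toFinset, x n := by
        refine Finset.sum_congr rfl fun n hn => ?_
        exact Set.indicator_of_mem (by simpa using hn) x
      have := hAsum.unique h1
      simp [this, h2]
    exact (Set.countable_range _).mono hsub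
  -- uncountability of the ideal sums
  obtain ⟨A, hAI, hAinf⟩ := hstrict
  obtain ⟨m, hmA, hmdec⟩ := exists_seq_aux x habs hne hAinf
  set y : ℕ → ℝ := fun n => x (m n) with hy
  have hypos : ∀ n, 0 < |y n| := fun n => abs_pos.2 (hne (m n))
  have hmanti : StrictAnti fun n => |y n| := by
    apply strictAnti_nat_of_succ_lt
    intro n
    have := hmdec n
    have := hypos n
    simp only [hy]
    linarith
  have hminj : Function.Injective m := by
    intro a b hab
    by_contra hne'
    rcases lt_or_gt_of_ne hne' with h' | h'
    · exact absurd (congrArg (fun k => |x k|) hab) (ne_of_gt (hmanti h'))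
    · exact absurd (congrArg (fun k => |x k|) hab) (ne_of_lt (hmanti h'))
  have hysum : Summable fun n => |y n| := by
    have : Summable ((fun n => |x n|) ∘ m) := habs.comp_injective hminj
    exact this
  -- the injection from Set ℕ
  set G : Set ℕ → ℝ := fun S => ∑' n, S.indicator y n with hG
  have hGmem : ∀ S : Set ℕ, G S ∈ {r : ℝ | ∃ A ∈ I, HasSum (Set.indicator A x) r} := by
    intro S
    refine ⟨m '' S, hdown A hAI _ (by rintro _ ⟨n, _, rfl⟩; exact hmA n), ?_⟩
    have hsumm : Summable ((m '' S).indicator x) := hx.indicator _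
    have heq : (∑' n, (m '' S).indicator x n) = G S := by
      rw [hG]
      rw [← tsum_subtype (m '' S) x, tsum_image x (hminj.injOn), tsum_subtype S (fun n => x (m n))]
    have := hsumm.hasSum
    rwa [heq] at this
  have hGinj : Function.Injective G :=
    fun S T h => inj_subsums y hysum (fun n => hmdec n) hypos h
  have huncount : ¬ {r : ℝ | ∃ A ∈ I, HasSum (Set.indicator A x) r}.Countable := by
    intro hc
    have : Countable {r : ℝ | ∃ A ∈ I, HasSum (Set.indicator A x) r} := hc.to_subtype
    have hinj2 : Function.Injective
        (fun S : Set ℕ => (⟨G S, hGmem S⟩ :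
          {r : ℝ | ∃ A ∈ I, HasSum (Set.indicator A x) r})) := by
      intro S T h
      exact hGinj (congrArg Subtype.val h)
    have : Countable (Set ℕ) := Function.Injective.countable hinj2
    obtain ⟨f, hf⟩ := exists_injective_nat (Set ℕ)
    exact Function.cantor_injective f hf
  refine ⟨hcount, huncount, ?_⟩
  have hsub : {r : ℝ | ∃ A : Set ℕ, A.Finite ∧ HasSum (Set.indicator A x) r} ⊆
      {r : ℝ | ∃ A ∈ I, HasSum (Set.indicator A x) r} := by
    rintro r ⟨A, hAfin, hAsum⟩
    exact ⟨A, hfin A hAfin, hAsum⟩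
  refine hsub.ssubset_of_ne ?_
  intro heq
  exact huncount (heq ▸ hcount)
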